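/- Let f(a) = (π - 2a + 4√(a²-1) - 4·arcsec(a))/(π + 2a) for a > 1. Then f'(a) = 0 if and only if (π/(2a))·√(a²-1) = arccsc(a), i.e., (π/(2a))·√(a²-1) = arcsin(1/a). -/

import Mathlib

open Real

theorem lateral_ratio_critical_point (a : ℝ) (ha : 1 < a) :
    deriv (fun a : ℝ =>
        (π - 2 * a + 4 * Real.sqrt (a ^ 2 - 1) - 4 * Real.arccos (1 / a)) /
          (π + 2 * a)) a = 0 ↔
      (π / (2 * a)) * Real.sqrt (a ^ 2 - 1) = Real.arcsin (1 / a) := by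
  have ha0 : 0 < a := lt_trans one_pos ha
  have hs2 : (0:ℝ) < a ^ 2 - 1 := by nlinarith
  set s := Real.sqrt (a ^ 2 - 1) with hsdef
  have hs : 0 < s := Real.sqrt_pos.mpr hs2
  have hss : s ^ 2 = a ^ 2 - 1 := Real.sq_sqrt hs2.le
  have hD : (0:ℝ) < π + 2 * a := by positivity
  -- derivative of sqrt(x^2-1)
  have h1 : HasDerivAt (fun x : ℝ => Real.sqrt (x ^ 2 - 1)) (a / s) a := by
    have hinner : HasDerivAt (fun x : ℝ => x ^ 2 - 1) (2 * a) a := by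
      simpa using ((hasDerivAt_pow 2 a).sub_const 1)
    have := (Real.hasDerivAt_sqrt (ne_of_gt hs2)).comp a hinner
    refine this.congr_deriv ?_
    rw [← hsdef]
    field_simp
  -- derivative of arccos(1/x)
  have h2 : HasDerivAt (fun x : ℝ => Real.arccos (1 / x)) (1 / (a * s)) a := by
    have hinner : HasDerivAt (fun x : ℝ => 1 / x) (-(1 / a ^ 2)) a := by
      simpa [one_div] using (hasDerivAt_inv (ne_of_gt ha0))
    have h1a : (1:ℝ) / a ≠ -1 := by
      have : (0:ℝ) < 1 / a := by positivity
      linarith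
    have h1b : (1:ℝ) / a ≠ 1 := by
      have : (1:ℝ) / a < 1 := by
        rw [div_lt_one ha0]; exact ha
      linarith
    have hsq : Real.sqrt (1 - (1 / a) ^ 2) = s / a := by
      have heq : 1 - (1 / a) ^ 2 = (s / a) ^ 2 := by
        field_simp
        nlinarith [hss]
      rw [heq, Real.sqrt_sq (by positivity)]
    have := (Real.hasDerivAt_arccos h1a h1b).comp a hinner
    refine this.congr_deriv ?_
    rw [hsq]
    field_simp
  -- derivative of numerator
  have hN : HasDerivAt (fun x : ℝ =>
      π - 2 * x + 4 * Real.sqrt (x ^ 2 - 1) - 4 * Real.arccos (1 / x))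
      (-2 + 4 * (a / s) - 4 * (1 / (a * s))) a := by
    have h0 : HasDerivAt (fun x : ℝ => π - 2 * x) (-2) a := by
      simpa using ((hasDerivAt_id a).const_mul 2).const_sub π
    exact (h0.add (h1.const_mul 4)).sub (h2.const_mul 4)
  have hDen : HasDerivAt (fun x : ℝ => π + 2 * x) 2 a := by
    simpa using ((hasDerivAt_id a).const_mul 2).const_add π
  have hf : HasDerivAt (fun x : ℝ =>
      (π - 2 * x + 4 * Real.sqrt (x ^ 2 - 1) - 4 * Real.arccos (1 / x)) /
        (π + 2 * x))
      (((-2 + 4 * (a / s) - 4 * (1 / (a * s))) * (π + 2 * a) -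
        (π - 2 * a + 4 * s - 4 * Real.arccos (1 / a)) * 2) / (π + 2 * a) ^ 2) a :=
    hN.div hDen (ne_of_gt hD)
  rw [hf.deriv]
  rw [div_eq_zero_iff]
  have hD2 : (π + 2 * a) ^ 2 ≠ 0 := by positivity
  have h4 : 4 * (a / s) - 4 * (1 / (a * s)) = 4 * s / a := by
    field_simp
    linear_combination (-1 : ℝ) * hss
  have hkey : (-2 + 4 * (a / s) - 4 * (1 / (a * s))) * (π + 2 * a) -
      (π - 2 * a + 4 * s - 4 * Real.arccos (1 / a)) * 2 =
      8 * ((π / (2 * a)) * s - Real.arcsin (1 / a)) := by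
    rw [Real.arccos_eq_pi_div_two_sub_arcsin]
    have h5 : -2 + 4 * (a / s) - 4 * (1 / (a * s)) = -2 + 4 * s / a := by
      linarith
    rw [h5]
    field_simp
    ring
  constructor
  · rintro (h | h)
    · rw [hkey] at h
      have : (π / (2 * a)) * s - Real.arcsin (1 / a) = 0 := by linarith
      linarith
    · exact absurd h hD2
  · intro h
    left
    rw [hkey, h]
    ring
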